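/- Define F(x,y,z) = sin(x) − cosh(y)·sin(z). Then for every (x,y,z) ∈ ℝ³ with F(x,y,z) = 0: (i) E[F](x,y,z) = 0 (the surface {sin x = cosh y · sin z} has zero mean curvature), and (ii) F_x² + F_y² − F_z² = −sinh²(y)·cos²(z) ≤ 0; hence the surface is spacelike except where sinh(y)·cos(z) = 0. -/

import Mathlib

/-- Partial derivative with respect to the first variable. -/
noncomputable def px (F : ℝ → ℝ → ℝ → ℝ) (x y z : ℝ) : ℝ := deriv (fun t => F t y z) x

/-- Partial derivative with respect to the second variable. -/
noncomputable def py (F : ℝ → ℝ → ℝ → ℝ) (x y z : ℝ) : ℝ := deriv (fun t => F x t z) y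

/-- Partial derivative with respect to the third variable. -/
noncomputable def pz (F : ℝ → ℝ → ℝ → ℝ) (x y z : ℝ) : ℝ := deriv (fun t => F x y t) z

/-- The zero mean curvature expression `E[F]` for a level surface `{F = 0}` in
Lorentz–Minkowski space `𝕃³ = (ℝ³, dx² + dy² − dz²)`:
`E[F] = −(F_x² + F_y² − F_z²)(F_xx + F_yy − F_zz) + F_x²F_xx + F_y²F_yy + F_z²F_zz
        + 2F_xF_yF_xy − 2F_xF_zF_xz − 2F_yF_zF_yz`. -/
noncomputable def Eop (F : ℝ → ℝ → ℝ → ℝ) (x y z : ℝ) : ℝ :=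
  -(px F x y z ^ 2 + py F x y z ^ 2 - pz F x y z ^ 2) *
      (px (px F) x y z + py (py F) x y z - pz (pz F) x y z)
    + px F x y z ^ 2 * px (px F) x y z
    + py F x y z ^ 2 * py (py F) x y z
    + pz F x y z ^ 2 * pz (pz F) x y z
    + 2 * px F x y z * py F x y z * py (px F) x y z
    - 2 * px F x y z * pz F x y z * pz (px F) x y z
    - 2 * py F x y z * pz F x y z * pz (py F) x y z

/-- The surface `sin x = cosh y · sin z` has zero mean curvature and
`F_x² + F_y² − F_z² = −sinh²y · cos²z ≤ 0`: it is spacelike except where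
`sinh y · cos z = 0`. -/
theorem stmt_19 (F : ℝ → ℝ → ℝ → ℝ)
    (hF : ∀ x y z : ℝ, F x y z = Real.sin x - Real.cosh y * Real.sin z) :
    ∀ x y z : ℝ, F x y z = 0 →
      Eop F x y z = 0 ∧
      px F x y z ^ 2 + py F x y z ^ 2 - pz F x y z ^ 2
        = -(Real.sinh y ^ 2 * Real.cos z ^ 2) ∧
      px F x y z ^ 2 + py F x y z ^ 2 - pz F x y z ^ 2 ≤ 0 := by
  have hpx : ∀ x y z : ℝ, px F x y z = Real.cos x := by
    intro x y z
    unfold px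
    rw [show (fun t => F t y z) = fun t => Real.sin t - Real.cosh y * Real.sin z from
      funext fun t => hF t y z]
    have : HasDerivAt (fun t => Real.sin t - Real.cosh y * Real.sin z) (Real.cos x) x := by
      simpa using (Real.hasDerivAt_sin x).sub_const (Real.cosh y * Real.sin z)
    exact this.deriv
  have hpy : ∀ x y z : ℝ, py F x y z = -(Real.sinh y * Real.sin z) := by
    intro x y z
    unfold py
    rw [show (fun t => F x t z) = fun t => Real.sin x - Real.cosh t * Real.sin z from
      funext fun t => hF x t z]
    have : HasDerivAt (fun t => Real.sin x - Real.cosh t * Real.sin z)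
        (-(Real.sinh y * Real.sin z)) y := by
      simpa using ((Real.hasDerivAt_cosh y).mul_const (Real.sin z)).const_sub (Real.sin x)
    exact this.deriv
  have hpz : ∀ x y z : ℝ, pz F x y z = -(Real.cosh y * Real.cos z) := by
    intro x y z
    unfold pz
    rw [show (fun t => F x y t) = fun t => Real.sin x - Real.cosh y * Real.sin t from
      funext fun t => hF x y t]
    have : HasDerivAt (fun t => Real.sin x - Real.cosh y * Real.sin t)
        (-(Real.cosh y * Real.cos z)) z := by
      simpa using ((Real.hasDerivAt_sin z).const_mul (Real.cosh y)).const_sub (Real.sin x)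
    exact this.deriv
  have hpxx : ∀ x y z : ℝ, px (px F) x y z = -Real.sin x := by
    intro x y z
    show deriv (fun t => px F t y z) x = -Real.sin x
    rw [show (fun t => px F t y z) = fun t => Real.cos t from funext fun t => hpx t y z]
    simp
  have hpxy : ∀ x y z : ℝ, py (px F) x y z = 0 := by
    intro x y z
    show deriv (fun t => px F x t z) y = 0
    rw [show (fun t => px F x t z) = fun _ => Real.cos x from funext fun t => hpx x t z]
    simp
  have hpxz : ∀ x y z : ℝ, pz (px F) x y z = 0 := by
    intro x y z
    show deriv (fun t => px F x y t) z = 0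
    rw [show (fun t => px F x y t) = fun _ => Real.cos x from funext fun t => hpx x y t]
    simp
  have hpyy : ∀ x y z : ℝ, py (py F) x y z = -(Real.cosh y * Real.sin z) := by
    intro x y z
    show deriv (fun t => py F x t z) y = -(Real.cosh y * Real.sin z)
    rw [show (fun t => py F x t z) = fun t => -(Real.sinh t * Real.sin z) from
      funext fun t => hpy x t z]
    have : HasDerivAt (fun t => -(Real.sinh t * Real.sin z))
        (-(Real.cosh y * Real.sin z)) y := by
      simpa using ((Real.hasDerivAt_sinh y).mul_const (Real.sin z)).fun_neg
    exact this.deriv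
  have hpyz : ∀ x y z : ℝ, pz (py F) x y z = -(Real.sinh y * Real.cos z) := by
    intro x y z
    show deriv (fun t => py F x y t) z = -(Real.sinh y * Real.cos z)
    rw [show (fun t => py F x y t) = fun t => -(Real.sinh y * Real.sin t) from
      funext fun t => hpy x y t]
    have : HasDerivAt (fun t => -(Real.sinh y * Real.sin t))
        (-(Real.sinh y * Real.cos z)) z := by
      simpa [mul_comm] using ((Real.hasDerivAt_sin z).const_mul (Real.sinh y)).fun_neg
    exact this.deriv
  have hpzz : ∀ x y z : ℝ, pz (pz F) x y z = Real.cosh y * Real.sin z := by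
    intro x y z
    show deriv (fun t => pz F x y t) z = Real.cosh y * Real.sin z
    rw [show (fun t => pz F x y t) = fun t => -(Real.cosh y * Real.cos t) from
      funext fun t => hpz x y t]
    have : HasDerivAt (fun t => -(Real.cosh y * Real.cos t))
        (Real.cosh y * Real.sin z) z := by
      simpa [mul_comm] using ((Real.hasDerivAt_cos z).const_mul (Real.cosh y)).fun_neg
    exact this.deriv
  intro x y z h0
  have hs : Real.sin x = Real.cosh y * Real.sin z := by
    have := hF x y z; rw [this] at h0; linarith
  have p1 : Real.sin x ^ 2 + Real.cos x ^ 2 = 1 := Real.sin_sq_add_cos_sq x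
  have p2 : Real.cosh y ^ 2 - Real.sinh y ^ 2 = 1 := Real.cosh_sq_sub_sinh_sq y
  have p3 : Real.sin z ^ 2 + Real.cos z ^ 2 = 1 := Real.sin_sq_add_cos_sq z
  have key : px F x y z ^ 2 + py F x y z ^ 2 - pz F x y z ^ 2
      = -(Real.sinh y ^ 2 * Real.cos z ^ 2) := by
    rw [hpx, hpy, hpz]
    linear_combination p1 - p3
      - (Real.sin x + Real.cosh y * Real.sin z) * hs
      - (Real.sin z ^ 2 + Real.cos z ^ 2) * p2
  refine ⟨?_, key, ?_⟩
  · unfold Eop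
    rw [hpx, hpy, hpz, hpxx, hpxy, hpxz, hpyy, hpyz, hpzz]
    linear_combination
      ((Real.sinh y ^ 2 * Real.sin z ^ 2 - Real.cosh y ^ 2 * Real.cos z ^ 2)
        - 2 * Real.cosh y * Real.sin z * (Real.sin x + Real.cosh y * Real.sin z)) * hs
      + 2 * Real.cosh y * Real.sin z * p1
      - 2 * Real.cosh y * Real.sin z * (Real.sin z ^ 2 + Real.cos z ^ 2) * p2
      - 2 * Real.cosh y * Real.sin z * p3
  · rw [key]
    nlinarith [sq_nonneg (Real.sinh y * Real.cos z)]
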